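/- Let Γ = PSL₂(ℤ) and, for N ∈ ℕ, let Γ_N be the intersection of Γ with all conjugates g⁻¹Γg where g runs over the coset representatives (a b; 0 d) with a > 0, 0 ≤ b < d, ad = N of the double coset Γ·diag(N,1)·Γ. Then Γ_N = { (a b; c d) ∈ Γ : b ≡ c ≡ 0 mod N and a ≡ d mod N }. -/

import Mathlib

lemma tri_inv (α β δ : ℚ) (hα : α ≠ 0) (hδ : δ ≠ 0) :
    (Matrix.of ![![α, β], ![0, δ]])⁻¹ = Matrix.of ![![α⁻¹, -β/(α*δ)], ![0, δ⁻¹]] := by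
  apply Matrix.inv_eq_right_inv
  ext i j
  fin_cases i <;> fin_cases j <;>
    simp [Matrix.mul_apply, Fin.sum_univ_two, Matrix.one_apply] <;> field_simp <;> ring

/-- The congruence description of Γ_N: an element of Γ = PSL₂(ℤ), represented by an
integer matrix `A` of determinant 1, lies in all the conjugates `g⁻¹ Γ g` as `g` runs
over the coset representatives `(α β; 0 δ)`, `α > 0`, `0 ≤ β < δ`, `αδ = N`, of the
double coset `Γ (N 0; 0 1) Γ` (i.e. each conjugate `g A g⁻¹` has integer entries)
if and only if `b ≡ c ≡ 0 mod N` and `a ≡ d mod N`. -/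
theorem stmt2 (N : ℕ) (hN : 0 < N) (A : Matrix (Fin 2) (Fin 2) ℤ) (hdet : A.det = 1) :
    (∀ α β δ : ℤ, 0 < α → 0 ≤ β → β < δ → α * δ = (N : ℤ) →
      ∀ i j : Fin 2, ∃ m : ℤ,
        ((Matrix.of ![![(α : ℚ), (β : ℚ)], ![0, (δ : ℚ)]]) * A.map (fun x => (x : ℚ)) *
          (Matrix.of ![![(α : ℚ), (β : ℚ)], ![0, (δ : ℚ)]])⁻¹) i j = (m : ℚ)) ↔
    ((N : ℤ) ∣ A 0 1 ∧ (N : ℤ) ∣ A 1 0 ∧ A 0 0 ≡ A 1 1 [ZMOD (N : ℤ)]) := by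
  have hNQ : ((N : ℤ) : ℚ) ≠ 0 := by exact_mod_cast Nat.cast_ne_zero.mpr hN.ne'
  constructor
  · intro h
    -- N ∣ c
    have hc : (N : ℤ) ∣ A 1 0 := by
      obtain ⟨m, hm⟩ := h (N : ℤ) 0 1 (by exact_mod_cast hN) le_rfl one_pos (mul_one _)
        1 0
      simp only [Int.cast_zero, Int.cast_one] at hm
      rw [tri_inv _ _ _ hNQ one_ne_zero] at hm
      simp [Matrix.mul_apply, Matrix.vecMul, dotProduct, Fin.sum_univ_two, Matrix.map_apply] at hm
      refine ⟨m, ?_⟩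
      have : (A 1 0 : ℚ) = (N : ℤ) * m := by
        field_simp at hm
        linear_combination hm
      exact_mod_cast this
    have hb : (N : ℤ) ∣ A 0 1 := by
      obtain ⟨m, hm⟩ := h 1 0 (N : ℤ) one_pos le_rfl (by exact_mod_cast hN) (one_mul _)
        0 1
      simp only [Int.cast_zero, Int.cast_one] at hm
      rw [tri_inv _ _ _ one_ne_zero hNQ] at hm
      simp [Matrix.mul_apply, Matrix.vecMul, dotProduct, Fin.sum_univ_two, Matrix.map_apply] at hm
      refine ⟨m, ?_⟩
      have : (A 0 1 : ℚ) = (N : ℤ) * m := by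
        field_simp at hm
        linear_combination hm
      exact_mod_cast this
    refine ⟨hb, hc, ?_⟩
    rcases eq_or_lt_of_le (show 1 ≤ N from hN) with h1 | h1
    · have : N = 1 := h1.symm
      subst this
      exact Int.modEq_one
    · obtain ⟨m, hm⟩ := h 1 1 (N : ℤ) one_pos zero_le_one (by exact_mod_cast h1) (one_mul _)
        0 1
      simp only [Int.cast_zero, Int.cast_one] at hm
      rw [tri_inv _ _ _ one_ne_zero hNQ] at hm
      simp [Matrix.mul_apply, Matrix.vecMul, dotProduct, Fin.sum_univ_two, Matrix.map_apply] at hm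
      have key : A 0 1 + A 1 1 - A 0 0 - A 1 0 = (N : ℤ) * m := by
        have : (A 0 1 : ℚ) + A 1 1 - A 0 0 - A 1 0 = (N : ℤ) * m := by
          field_simp at hm
          linear_combination hm
        exact_mod_cast this
      rw [Int.modEq_iff_dvd]
      obtain ⟨b', hb'⟩ := hb
      obtain ⟨c', hc'⟩ := hc
      exact ⟨m - b' + c', by linarith [key, hb', hc']⟩
  · rintro ⟨hb, hc, had⟩ α β δ hα hβ hβδ hαδ i j
    have hδ : (0 : ℤ) < δ := lt_of_le_of_lt hβ hβδ
    have hαQ : ((α : ℤ) : ℚ) ≠ 0 := by exact_mod_cast hα.ne'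
    have hδQ : ((δ : ℤ) : ℚ) ≠ 0 := by exact_mod_cast hδ.ne'
    obtain ⟨b', hb'⟩ := hb
    obtain ⟨c', hc'⟩ := hc
    obtain ⟨k, hk⟩ := Int.modEq_iff_dvd.mp had
    -- A 1 1 - A 0 0 = N * k
    have hbQ : (A 0 1 : ℚ) = α * δ * b' := by rw [← hαδ] at hb'; exact_mod_cast hb'
    have hcQ : (A 1 0 : ℚ) = α * δ * c' := by rw [← hαδ] at hc'; exact_mod_cast hc'
    have hkQ : (A 1 1 : ℚ) - A 0 0 = α * δ * k := by rw [← hαδ] at hk; exact_mod_cast hk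
    rw [tri_inv _ _ _ hαQ hδQ]
    have hdQ : ((A 1 1 : ℤ) : ℚ) = A 0 0 + α * δ * k := by linarith [hkQ]
    fin_cases i <;> fin_cases j
    · exact ⟨A 0 0 + β * δ * c', by
        simp [Matrix.mul_apply, Matrix.vecMul, dotProduct, Fin.sum_univ_two,
          Matrix.map_apply]
        simp only [hbQ, hcQ, hdQ]
        field_simp⟩
    · exact ⟨α * α * b' + α * β * k - β * β * c', by
        simp [Matrix.mul_apply, Matrix.vecMul, dotProduct, Fin.sum_univ_two,
          Matrix.map_apply]
        simp only [hbQ, hcQ, hdQ]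
        field_simp
        ring⟩
    · exact ⟨δ * δ * c', by
        simp [Matrix.mul_apply, Matrix.vecMul, dotProduct, Fin.sum_univ_two,
          Matrix.map_apply]
        simp only [hbQ, hcQ, hdQ]
        field_simp⟩
    · exact ⟨A 1 1 - β * δ * c', by
        simp [Matrix.mul_apply, Matrix.vecMul, dotProduct, Fin.sum_univ_two,
          Matrix.map_apply]
        simp only [hbQ, hcQ, hdQ]
        field_simp
        ring⟩
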